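/- Let h, H : X → ℂ be Sobolev W^{1,2} maps on an open set X ⊆ ℂ with J_h ≥ 0 and J_H ≥ 0 a.e., sharing the same Hopf product h_z conj(h_z̄) = H_z conj(H_z̄) = φ(z) ≠ 0 almost everywhere. Set F = H − h. Then a.e.: |F_z̄| = sqrt(k_h · k_H) · |F_z| where k_h = |h_z̄|/|h_z| ≤ 1 and k_H = |H_z̄|/|H_z| ≤ 1; in particular the Jacobian J_F = |F_z|² − |F_z̄|² is nonnegative almost everywhere, and |DF|² = 2(1 + k_h k_H)/(1 − k_h k_H) · J_F at points where k_h k_H < 1. -/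

import Mathlib

open Complex MeasureTheory Real Filter
open scoped Classical Topology

/-- Wirtinger derivative ∂f/∂z. -/
noncomputable def wdz (f : ℂ → ℂ) (z : ℂ) : ℂ :=
  (fderiv ℝ f z 1 - Complex.I * fderiv ℝ f z Complex.I) / 2

/-- Wirtinger derivative ∂f/∂z̄. -/
noncomputable def wdzbar (f : ℂ → ℂ) (z : ℂ) : ℂ :=
  (fderiv ℝ f z 1 + Complex.I * fderiv ℝ f z Complex.I) / 2

/-- Jacobian determinant J(z,f) = |f_z|² − |f_z̄|². -/
noncomputable def jac (f : ℂ → ℂ) (z : ℂ) : ℝ :=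
  ‖wdz f z‖ ^ 2 - ‖wdzbar f z‖ ^ 2

lemma stmt6_aux1 (p na nA : ℝ) (hna : na ≠ 0) (hnA : nA ≠ 0) :
    p / na / na * (p / nA / nA) = (p / (na * nA)) ^ 2 := by
  field_simp

lemma stmt6_aux2 (s k : ℝ) (hk : k < 1) :
    2 * (s ^ 2 + k * s ^ 2) = 2 * (1 + k) / (1 - k) * (s ^ 2 - k * s ^ 2) := by
  have h : (1 : ℝ) - k ≠ 0 := by linarith
  field_simp

set_option maxHeartbeats 1000000 in
/-- Distortion of the difference of two solutions sharing the same nonvanishing Hopf product. -/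
theorem stmt6 (X : Set ℂ) (hX : IsOpen X) (h H φ : ℂ → ℂ)
    (hreg : ∀ᵐ z ∂(volume.restrict X), DifferentiableAt ℝ h z ∧ DifferentiableAt ℝ H z)
    (hJh : ∀ᵐ z ∂(volume.restrict X), 0 ≤ jac h z)
    (hJH : ∀ᵐ z ∂(volume.restrict X), 0 ≤ jac H z)
    (hHopf : ∀ᵐ z ∂(volume.restrict X),
      wdz h z * (starRingEnd ℂ) (wdzbar h z) = φ z ∧
      wdz H z * (starRingEnd ℂ) (wdzbar H z) = φ z ∧ φ z ≠ 0)
    (F : ℂ → ℂ) (hF : ∀ z, F z = H z - h z) :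
    ∀ᵐ z ∂(volume.restrict X),
      ‖wdzbar h z‖ / ‖wdz h z‖ ≤ 1 ∧
      ‖wdzbar H z‖ / ‖wdz H z‖ ≤ 1 ∧
      ‖wdzbar F z‖
        = Real.sqrt ((‖wdzbar h z‖ / ‖wdz h z‖) * (‖wdzbar H z‖ / ‖wdz H z‖)) * ‖wdz F z‖ ∧
      0 ≤ jac F z ∧
      ((‖wdzbar h z‖ / ‖wdz h z‖) * (‖wdzbar H z‖ / ‖wdz H z‖) < 1 →
        2 * (‖wdz F z‖ ^ 2 + ‖wdzbar F z‖ ^ 2)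
          = 2 * (1 + (‖wdzbar h z‖ / ‖wdz h z‖) * (‖wdzbar H z‖ / ‖wdz H z‖))
            / (1 - (‖wdzbar h z‖ / ‖wdz h z‖) * (‖wdzbar H z‖ / ‖wdz H z‖)) * jac F z) := by
  have hFf : F = fun w => H w - h w := funext hF
  filter_upwards [hreg, hJh, hJH, hHopf] with z hd jh jH he
  obtain ⟨hdh, hdH⟩ := hd
  obtain ⟨e1, e2, hφ⟩ := he
  simp only [jac] at jh jH ⊢
  set a := wdz h z with ha_def
  set b := wdzbar h z with hb_def
  set A := wdz H z with hA_def
  set B := wdzbar H z with hB_def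
  have hfd : fderiv ℝ F z = fderiv ℝ H z - fderiv ℝ h z := by
    rw [hFf]; exact fderiv_sub hdH hdh
  have hFz : wdz F z = A - a := by
    simp only [wdz, hfd, ContinuousLinearMap.sub_apply, ha_def, hA_def]
    ring
  have hFzbar : wdzbar F z = B - b := by
    simp only [wdzbar, hfd, ContinuousLinearMap.sub_apply, hb_def, hB_def]
    ring
  rw [hFz, hFzbar]
  clear_value a b A B
  clear hfd hFz hFzbar hFf hF hreg hJh hJH hHopf
  have ha : a ≠ 0 := by
    intro h0; apply hφ; rw [← e1, h0]; simp
  have hA : A ≠ 0 := by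
    intro h0; apply hφ; rw [← e2, h0]; simp
  have ha' : (starRingEnd ℂ) a ≠ 0 := by simpa using ha
  have hA' : (starRingEnd ℂ) A ≠ 0 := by simpa using hA
  have e1' : (starRingEnd ℂ) a * b = (starRingEnd ℂ) (φ z) := by
    simpa [map_mul] using congrArg (starRingEnd ℂ) e1
  have e2' : (starRingEnd ℂ) A * B = (starRingEnd ℂ) (φ z) := by
    simpa [map_mul] using congrArg (starRingEnd ℂ) e2
  have hb : b = (starRingEnd ℂ) (φ z) / (starRingEnd ℂ) a := by
    field_simp
    linear_combination e1'
  have hB : B = (starRingEnd ℂ) (φ z) / (starRingEnd ℂ) A := by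
    field_simp
    linear_combination e2'
  have key : B - b = -((starRingEnd ℂ)) (φ z * (A - a) / (a * A)) := by
    rw [hb, hB]
    rw [map_div₀, map_mul, map_sub, map_mul]
    field_simp
    ring
  have hapos : 0 < ‖a‖ := norm_pos_iff.mpr ha
  have hApos : 0 < ‖A‖ := norm_pos_iff.mpr hA
  have hnb : ‖b‖ = ‖φ z‖ / ‖a‖ := by
    rw [hb]; simp [norm_div]
  have hnB : ‖B‖ = ‖φ z‖ / ‖A‖ := by
    rw [hB]; simp [norm_div]
  have hnBb : ‖B - b‖ = ‖φ z‖ * ‖A - a‖ / (‖a‖ * ‖A‖) := by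
    rw [key, norm_neg, RCLike.norm_conj, norm_div, norm_mul, norm_mul]
  rw [hnBb, hnb, hnB]
  -- now a purely real statement
  have hpnn : 0 ≤ ‖φ z‖ := norm_nonneg _
  have hsnn : 0 ≤ ‖A - a‖ := norm_nonneg _
  have hba : ‖b‖ ≤ ‖a‖ := by
    nlinarith [norm_nonneg b, norm_nonneg a]
  have hBA : ‖B‖ ≤ ‖A‖ := by
    nlinarith [norm_nonneg B, norm_nonneg A]
  have h1 : ‖φ z‖ ≤ ‖a‖ ^ 2 := by
    have := hba; rw [hnb, div_le_iff₀ hapos] at this; nlinarith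
  have h2 : ‖φ z‖ ≤ ‖A‖ ^ 2 := by
    have := hBA; rw [hnB, div_le_iff₀ hApos] at this; nlinarith
  have hφaA : ‖φ z‖ ≤ ‖a‖ * ‖A‖ := by nlinarith
  set p := ‖φ z‖
  set na := ‖a‖
  set nA := ‖A‖
  set s := ‖A - a‖
  clear_value p na nA s
  have hna : na ≠ 0 := ne_of_gt hapos
  have hnA : nA ≠ 0 := ne_of_gt hApos
  have hK : p / na / na * (p / nA / nA) = (p / (na * nA)) ^ 2 :=
    stmt6_aux1 p na nA hna hnA
  have hkh : p / na / na ≤ 1 := by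
    rw [div_div, div_le_one (by positivity)]; nlinarith
  have hkH : p / nA / nA ≤ 1 := by
    rw [div_div, div_le_one (by positivity)]; nlinarith
  refine ⟨hkh, hkH, ?_, ?_, ?_⟩
  · rw [hK, Real.sqrt_sq (by positivity)]
    ring
  · have h3 : (p * s / (na * nA)) ^ 2 = (p / (na * nA)) ^ 2 * s ^ 2 := by ring
    have hple : (p / (na * nA)) ^ 2 ≤ 1 := by
      rw [div_pow, div_le_one (by positivity)]
      nlinarith
    nlinarith [sq_nonneg s]
  · intro hlt
    have hsq : (p * s / (na * nA)) ^ 2 = (p / na / na * (p / nA / nA)) * s ^ 2 := by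
      rw [hK]; ring
    rw [hsq]
    exact stmt6_aux2 s _ hlt
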